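/- arXiv:hep-th/9603160 — 2 statements merged into one kernel-verified Lean document; each statement's English description precedes it below -/
import Mathlib

section
/- Let F : ℝ → ℝ be twice continuously differentiable with F(0) = 0, F'(0) = 0, and F''(0) = 2a for some a > 0, and let f : ℝ → ℝ be continuous with f(0) = −b for some b > 0. Then there exist ε₀ > 0 and a function ε ↦ x_ε defined for 0 < ε < ε₀ such that F(x_ε) + ε f(x_ε) = 0, x_ε > 0, and x_ε/√ε → √(b/a) as ε → 0⁺. -/
open Filter

set_option maxHeartbeats 1000000 in
theorem stmt_7 (F f : ℝ → ℝ) (a b : ℝ) (ha : 0 < a) (hb : 0 < b)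
    (hF : ContDiff ℝ 2 F) (hF0 : F 0 = 0) (hF1 : deriv F 0 = 0)
    (hF2 : deriv (deriv F) 0 = 2 * a)
    (hf : Continuous f) (hf0 : f 0 = -b) :
    ∃ ε₀ > (0 : ℝ), ∃ x : ℝ → ℝ,
      (∀ ε : ℝ, 0 < ε → ε < ε₀ → F (x ε) + ε * f (x ε) = 0 ∧ 0 < x ε) ∧
      Tendsto (fun ε : ℝ => x ε / Real.sqrt ε) (nhdsWithin 0 (Set.Ioi 0))
        (nhds (Real.sqrt (b / a))) := by
  classical
  set c := Real.sqrt (b / a) with hc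
  have hc0 : 0 < c := Real.sqrt_pos.mpr (div_pos hb ha)
  have hc2 : a * c ^ 2 = b := by
    rw [hc, Real.sq_sqrt (div_pos hb ha).le]
    field_simp
  have hFd : Differentiable ℝ F := hF.differentiable (by norm_num)
  have hFc : Continuous F := hFd.continuous
  have hF'c : ContDiff ℝ 1 (deriv F) :=
    (contDiff_succ_iff_deriv.mp (by exact_mod_cast hF)).2.2
  have hF'd : DifferentiableAt ℝ (deriv F) 0 := (hF'c.differentiable one_ne_zero) 0
  -- the slope limit for deriv F
  have hslope : Tendsto (fun x => deriv F x / x) (nhdsWithin (0:ℝ) {0}ᶜ) (nhds (2 * a)) := by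
    have h := hF'd.hasDerivAt
    rw [hF2] at h
    have h2 := hasDerivAt_iff_tendsto_slope.mp h
    have heq : slope (deriv F) 0 = fun x => deriv F x / x := by
      funext x
      rw [slope_def_field, hF1]
      simp
    rwa [heq] at h2
  -- L'Hopital : F x / x^2 → a from the right
  have hlim : Tendsto (fun x => F x / x ^ 2) (nhdsWithin (0:ℝ) (Set.Ioi 0)) (nhds a) := by
    apply deriv.lhopital_zero_nhdsGT (g := fun y : ℝ => y ^ 2)
    · exact Eventually.of_forall fun x => hFd x
    · filter_upwards [self_mem_nhdsWithin] with x hx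
      have hx' : 0 < x := hx
      have hd : deriv (fun y : ℝ => y ^ 2) x = 2 * x := by
        simp [deriv_pow]
      rw [hd]
      exact mul_ne_zero two_ne_zero (ne_of_gt hx')
    · have h5 : Tendsto F (nhdsWithin (0:ℝ) (Set.Ioi 0)) (nhds (F 0)) :=
        (hFc.tendsto 0).mono_left nhdsWithin_le_nhds
      rwa [hF0] at h5
    · have : Tendsto (fun y : ℝ => y ^ 2) (nhds (0:ℝ)) (nhds ((0:ℝ) ^ 2)) :=
        (continuous_pow 2).tendsto 0
      simpa using this.mono_left nhdsWithin_le_nhds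
    · have hmono : nhdsWithin (0:ℝ) (Set.Ioi 0) ≤ nhdsWithin (0:ℝ) {0}ᶜ :=
        nhdsWithin_mono _ (fun x hx => ne_of_gt hx)
      have h3 : Tendsto (fun x => deriv F x / x / 2) (nhdsWithin (0:ℝ) (Set.Ioi 0))
          (nhds (2 * a / 2)) := (hslope.mono_left hmono).div_const 2
      have heq : ∀ᶠ x in nhdsWithin (0:ℝ) (Set.Ioi 0),
          deriv F x / x / 2 = deriv F x / deriv (fun y : ℝ => y ^ 2) x := by
        filter_upwards [self_mem_nhdsWithin] with x hx
        have hd : deriv (fun y : ℝ => y ^ 2) x = 2 * x := by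
          simp [deriv_pow]
        rw [hd, div_div, mul_comm x 2]
      have := h3.congr' heq
      simpa using this
  -- key uniform estimate
  have hkey : ∀ η : ℝ, 0 < η → ∃ ε₁ > (0:ℝ), ∀ ε : ℝ, 0 < ε → ε < ε₁ →
      ∀ y : ℝ, c / 2 * Real.sqrt ε ≤ y → y ≤ 2 * c * Real.sqrt ε →
      |F y + ε * f y - ε * (a * (y / Real.sqrt ε) ^ 2 - b)| ≤ ε * ((4 * c ^ 2 + 1) * η) := by
    intro η hη
    obtain ⟨δ₁, hδ₁, hδ₁p⟩ := Metric.tendsto_nhdsWithin_nhds.mp hlim η hη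
    have hfc : Tendsto f (nhds (0:ℝ)) (nhds (-b)) := by
      have := hf.tendsto 0; rwa [hf0] at this
    obtain ⟨δ₂, hδ₂, hδ₂p⟩ := Metric.tendsto_nhds_nhds.mp hfc η hη
    set δ := min δ₁ δ₂ with hδdef
    have hδ : 0 < δ := lt_min hδ₁ hδ₂
    refine ⟨(δ / (2 * c)) ^ 2, by positivity, ?_⟩
    intro ε hε hε1 y hy1 hy2
    have hs0 : 0 < Real.sqrt ε := Real.sqrt_pos.mpr hε
    set s := Real.sqrt ε with hs
    have hs2 : s ^ 2 = ε := Real.sq_sqrt hε.le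
    have hsδ : s < δ / (2 * c) := by
      have h6 := Real.sqrt_lt_sqrt hε.le hε1
      rwa [Real.sqrt_sq (by positivity)] at h6
    have hy0 : 0 < y := lt_of_lt_of_le (by positivity) hy1
    have hyδ : y < δ := by
      have h2cs : s * (2 * c) < δ :=
        (lt_div_iff₀ (by positivity : (0:ℝ) < 2 * c)).mp hsδ
      have h7 : 2 * c * s = s * (2 * c) := by ring
      linarith [hy2, h7 ▸ h2cs]
    have hA : |F y / y ^ 2 - a| < η := by
      have h8 := hδ₁p (Set.mem_Ioi.mpr hy0) (by
        rw [Real.dist_eq, sub_zero, abs_of_pos hy0]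
        exact lt_of_lt_of_le hyδ (min_le_left _ _))
      rwa [Real.dist_eq] at h8
    have hB : |f y + b| < η := by
      have h9 := hδ₂p (x := y) (by
        rw [Real.dist_eq, sub_zero, abs_of_pos hy0]
        exact lt_of_lt_of_le hyδ (min_le_right _ _))
      rw [Real.dist_eq] at h9
      have heq : f y - -b = f y + b := by ring
      rwa [heq] at h9
    -- algebraic identity
    have hid : F y + ε * f y - ε * (a * (y / s) ^ 2 - b)
        = y ^ 2 * (F y / y ^ 2 - a) + ε * (f y + b) := by
      have hy0' : y ≠ 0 := ne_of_gt hy0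
      have hs0' : s ≠ 0 := ne_of_gt hs0
      have hε' : ε = s ^ 2 := hs2.symm
      rw [hε']
      field_simp
      ring
    rw [hid]
    have h1 : |y ^ 2 * (F y / y ^ 2 - a) + ε * (f y + b)|
        ≤ y ^ 2 * |F y / y ^ 2 - a| + ε * |f y + b| := by
      calc |y ^ 2 * (F y / y ^ 2 - a) + ε * (f y + b)|
          ≤ |y ^ 2 * (F y / y ^ 2 - a)| + |ε * (f y + b)| := abs_add_le _ _
        _ = y ^ 2 * |F y / y ^ 2 - a| + ε * |f y + b| := by
            rw [abs_mul, abs_mul, abs_of_pos (by positivity : (0:ℝ) < y ^ 2),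
              abs_of_pos hε]
    have hy2' : y ^ 2 ≤ 4 * c ^ 2 * ε := by
      have h10 : y ^ 2 ≤ (2 * c * s) ^ 2 := by
        have := mul_self_le_mul_self hy0.le hy2
        calc y ^ 2 = y * y := sq y
          _ ≤ (2 * c * s) * (2 * c * s) := this
          _ = (2 * c * s) ^ 2 := (sq _).symm
      calc y ^ 2 ≤ (2 * c * s) ^ 2 := h10
        _ = 4 * c ^ 2 * s ^ 2 := by ring
        _ = 4 * c ^ 2 * ε := by rw [hs2]
    have habs : 0 ≤ |F y / y ^ 2 - a| := abs_nonneg _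
    have e1 : y ^ 2 * |F y / y ^ 2 - a| ≤ (4 * c ^ 2 * ε) * η :=
      mul_le_mul hy2' hA.le habs (by positivity)
    have e2 : ε * |f y + b| ≤ ε * η := mul_le_mul_of_nonneg_left hB.le hε.le
    have e3 : ε * ((4 * c ^ 2 + 1) * η) = (4 * c ^ 2 * ε) * η + ε * η := by ring
    linarith [h1, e1, e2, e3.ge]
  -- choose ε₀ using η₀
  have h4c : (0:ℝ) < 4 * c ^ 2 + 1 := by positivity
  set η₀ := 3 * b / (8 * (4 * c ^ 2 + 1)) with hη₀def
  have hη₀ : 0 < η₀ := by positivity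
  obtain ⟨ε₀, hε₀pos, hε₀p⟩ := hkey η₀ hη₀
  have hη₀e : (4 * c ^ 2 + 1) * η₀ = 3 * b / 8 := by
    rw [hη₀def]; field_simp
  -- existence of roots
  have hex : ∀ ε : ℝ, 0 < ε → ε < ε₀ →
      ∃ y : ℝ, (F y + ε * f y = 0 ∧ c / 2 * Real.sqrt ε < y ∧ y < 2 * c * Real.sqrt ε) := by
    intro ε hε hε1
    have hs0 : 0 < Real.sqrt ε := Real.sqrt_pos.mpr hε
    set s := Real.sqrt ε with hs
    have hεb : 0 < ε * b := mul_pos hε hb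
    have hcs : 0 < c * s := mul_pos hc0 hs0
    set G := fun y => F y + ε * f y with hG
    have hGc : Continuous G := hFc.add (continuous_const.mul hf)
    have hle : c / 2 * s ≤ 2 * c * s := by linarith [hcs]
    have h1 : G (c / 2 * s) < 0 := by
      have hthis := hε₀p ε hε hε1 (c / 2 * s) le_rfl hle
      rw [hη₀e, ← hs] at hthis
      have ht : (c / 2 * s) / s = c / 2 := by
        rw [mul_div_assoc, div_self (ne_of_gt hs0), mul_one]
      rw [ht] at hthis
      have heq : a * (c / 2) ^ 2 - b = -(3 * b / 4) := by linear_combination hc2 / 4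
      rw [heq] at hthis
      have habs := (abs_le.mp hthis).2
      show F (c / 2 * s) + ε * f (c / 2 * s) < 0
      nlinarith [habs, hεb]
    have h2 : 0 < G (2 * c * s) := by
      have hthis := hε₀p ε hε hε1 (2 * c * s) hle le_rfl
      rw [hη₀e, ← hs] at hthis
      have ht : (2 * c * s) / s = 2 * c := by
        rw [mul_div_assoc, div_self (ne_of_gt hs0), mul_one]
      rw [ht] at hthis
      have heq : a * (2 * c) ^ 2 - b = 3 * b := by linear_combination 4 * hc2
      rw [heq] at hthis
      have habs := (abs_le.mp hthis).1
      show 0 < F (2 * c * s) + ε * f (2 * c * s)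
      nlinarith [habs, hεb]
    have hIVT := intermediate_value_Ioo hle (hGc.continuousOn)
    have h0 : (0:ℝ) ∈ Set.Ioo (G (c / 2 * s)) (G (2 * c * s)) := ⟨h1, h2⟩
    obtain ⟨y, hyI, hyG⟩ := hIVT h0
    exact ⟨y, hyG, hyI.1, hyI.2⟩
  set x : ℝ → ℝ := fun ε =>
    if h : 0 < ε ∧ ε < ε₀ then (hex ε h.1 h.2).choose else 1 with hxdef
  have hxspec : ∀ ε : ℝ, 0 < ε → ε < ε₀ →
      F (x ε) + ε * f (x ε) = 0 ∧ c / 2 * Real.sqrt ε < x ε ∧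
        x ε < 2 * c * Real.sqrt ε := by
    intro ε h1 h2
    have hx : x ε = (hex ε h1 h2).choose := by
      rw [hxdef]
      simp only [dif_pos (And.intro h1 h2)]
    rw [hx]
    exact (hex ε h1 h2).choose_spec
  refine ⟨ε₀, hε₀pos, x, ?_, ?_⟩
  · intro ε h1 h2
    obtain ⟨hroot, hlo, hhi⟩ := hxspec ε h1 h2
    have hs0 : 0 < Real.sqrt ε := Real.sqrt_pos.mpr h1
    exact ⟨hroot, lt_of_le_of_lt (by positivity) hlo⟩
  · rw [Metric.tendsto_nhdsWithin_nhds]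
    intro δ' hδ'
    set δ := min δ' (c / 2) with hδdef
    have hδ : 0 < δ := lt_min hδ' (by positivity)
    have hδc : δ ≤ c / 2 := min_le_right _ _
    set m := a * c * δ with hmdef
    have hm : 0 < m := by positivity
    set η' := m / (2 * (4 * c ^ 2 + 1)) with hη'def
    have hη' : 0 < η' := by positivity
    obtain ⟨ε₂, hε₂pos, hε₂p⟩ := hkey η' hη'
    have hη'e : (4 * c ^ 2 + 1) * η' = m / 2 := by
      rw [hη'def]; field_simp
    refine ⟨min ε₀ ε₂, lt_min hε₀pos hε₂pos, ?_⟩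
    intro ε hεmem hεd
    rw [Real.dist_eq, sub_zero] at hεd
    have hε : 0 < ε := hεmem
    rw [abs_of_pos hε] at hεd
    have hεε₀ : ε < ε₀ := lt_of_lt_of_le hεd (min_le_left _ _)
    have hεε₂ : ε < ε₂ := lt_of_lt_of_le hεd (min_le_right _ _)
    obtain ⟨hroot, hlo, hhi⟩ := hxspec ε hε hεε₀
    simp only [Real.dist_eq]
    have hs0 : 0 < Real.sqrt ε := Real.sqrt_pos.mpr hε
    set s := Real.sqrt ε with hs
    set t := x ε / s with ht
    have htlo : c / 2 < t := by
      rw [ht, lt_div_iff₀ hs0]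
      exact hlo
    have hthi : t < 2 * c := by
      rw [ht, div_lt_iff₀ hs0]
      exact hhi
    have hkey2 := hε₂p ε hε hεε₂ (x ε) hlo.le hhi.le
    rw [hη'e, ← hs, ← ht, hroot] at hkey2
    have hkey3 : |ε * (a * t ^ 2 - b)| ≤ ε * (m / 2) := by
      have heq0 : |(0:ℝ) - ε * (a * t ^ 2 - b)| = |ε * (a * t ^ 2 - b)| := by
        rw [zero_sub, abs_neg]
      rw [← heq0]
      exact hkey2
    rw [abs_mul, abs_of_pos hε] at hkey3
    have hkey4 : |a * t ^ 2 - b| ≤ m / 2 := (mul_le_mul_iff_right₀ hε).mp hkey3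
    -- conclude |t - c| < δ ≤ δ'
    have hmain : |t - c| < δ := by
      by_contra hcon
      push_neg at hcon
      have habs := abs_le.mp hkey4
      rcases le_or_gt t c with hcase | hcase
      · -- t ≤ c - δ
        have ht1 : t ≤ c - δ := by
          rw [abs_of_nonpos (by linarith)] at hcon
          linarith
        have h6 : t - c ≤ -δ := by linarith
        have h7 : (0:ℝ) ≤ t + c := by linarith
        have k1 : (t - c) * (t + c) ≤ (-δ) * (t + c) :=
          mul_le_mul_of_nonneg_right h6 h7
        have k2 : δ * c ≤ δ * (t + c) :=
          mul_le_mul_of_nonneg_left (by linarith) hδ.le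
        have k3 : (t - c) * (t + c) ≤ -(δ * c) := by linarith
        have k4 : a * ((t - c) * (t + c)) ≤ a * (-(δ * c)) :=
          mul_le_mul_of_nonneg_left k3 ha.le
        have ht2 : a * t ^ 2 - b ≤ -m := by
          have : a * ((t - c) * (t + c)) = a * t ^ 2 - a * c ^ 2 := by ring
          rw [this] at k4
          have hm' : a * (-(δ * c)) = -m := by rw [hmdef]; ring
          rw [hm'] at k4
          linarith [hc2.ge, hc2.le]
        linarith [habs.1]
      · -- c + δ ≤ t
        have ht1 : c + δ ≤ t := by
          rw [abs_of_pos (by linarith)] at hcon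
          linarith
        have h6 : δ ≤ t - c := by linarith
        have h7 : c ≤ t + c := by linarith
        have k1 : δ * c ≤ (t - c) * (t + c) :=
          mul_le_mul h6 h7 hc0.le (by linarith)
        have k4 : a * (δ * c) ≤ a * ((t - c) * (t + c)) :=
          mul_le_mul_of_nonneg_left k1 ha.le
        have ht2 : m ≤ a * t ^ 2 - b := by
          have : a * ((t - c) * (t + c)) = a * t ^ 2 - a * c ^ 2 := by ring
          rw [this] at k4
          have hm' : a * (δ * c) = m := by rw [hmdef]; ring
          rw [hm'] at k4
          linarith [hc2.ge, hc2.le]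
        linarith [habs.2]
    exact lt_of_lt_of_le hmain (min_le_left _ _)
end

section
/- Under the hypotheses of the preceding statement (F ∈ C², F(0)=0, F'(0)=0, F''(0)=2a>0; f continuous, f(0)=−b<0; x_ε > 0 solving F(x_ε)+εf(x_ε)=0 with x_ε/√ε → √(b/a)), one has F'(x_ε)/√ε → 2√(ab) as ε → 0⁺. -/
open Filter

theorem stmt_8 (F f : ℝ → ℝ) (a b : ℝ) (ha : 0 < a) (hb : 0 < b)
    (hF : ContDiff ℝ 2 F) (hF0 : F 0 = 0) (hF1 : deriv F 0 = 0)
    (hF2 : deriv (deriv F) 0 = 2 * a)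
    (hf : Continuous f) (hf0 : f 0 = -b)
    (x : ℝ → ℝ)
    (hx : ∀ ε : ℝ, 0 < ε → F (x ε) + ε * f (x ε) = 0 ∧ 0 < x ε)
    (hlim : Tendsto (fun ε : ℝ => x ε / Real.sqrt ε) (nhdsWithin 0 (Set.Ioi 0))
      (nhds (Real.sqrt (b / a)))) :
    Tendsto (fun ε : ℝ => deriv F (x ε) / Real.sqrt ε) (nhdsWithin 0 (Set.Ioi 0))
      (nhds (2 * Real.sqrt (a * b))) := by
  -- deriv F is C¹
  have hF' : ContDiff ℝ 1 (deriv F) := by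
    have : ContDiff ℝ (1 + 1 : ℕ) F := by exact_mod_cast hF
    exact (contDiff_succ_iff_deriv.mp (by exact_mod_cast this)).2.2
  have hdiff : DifferentiableAt ℝ (deriv F) 0 :=
    (hF'.differentiable one_ne_zero) 0
  have hd : HasDerivAt (deriv F) (2 * a) 0 := by
    rw [← hF2]; exact hdiff.hasDerivAt
  have hslope : Tendsto (fun y : ℝ => deriv F y / y) (nhdsWithin 0 {(0:ℝ)}ᶜ)
      (nhds (2 * a)) := by
    have := hasDerivAt_iff_tendsto_slope.mp hd
    refine this.congr' ?_
    filter_upwards [self_mem_nhdsWithin] with y hy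
    simp [slope, hF1, div_eq_inv_mul]
  -- x ε → 0 within {0}ᶜ
  have hxs : Tendsto (fun ε : ℝ => Real.sqrt ε) (nhdsWithin 0 (Set.Ioi 0)) (nhds 0) := by
    have : Tendsto Real.sqrt (nhds 0) (nhds 0) := by
      simpa using Real.continuous_sqrt.tendsto 0
    exact this.comp nhdsWithin_le_nhds
  have hx0 : Tendsto x (nhdsWithin 0 (Set.Ioi 0)) (nhdsWithin 0 {(0:ℝ)}ᶜ) := by
    rw [tendsto_nhdsWithin_iff]
    constructor
    · have : Tendsto (fun ε : ℝ => x ε / Real.sqrt ε * Real.sqrt ε)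
          (nhdsWithin 0 (Set.Ioi 0)) (nhds (Real.sqrt (b / a) * 0)) := hlim.mul hxs
      rw [mul_zero] at this
      refine this.congr' ?_
      filter_upwards [self_mem_nhdsWithin] with ε hε
      have hε' : (0:ℝ) < ε := hε
      field_simp [Real.sqrt_ne_zero'.mpr hε']
    · filter_upwards [self_mem_nhdsWithin] with ε hε
      exact ne_of_gt ((hx ε hε).2)
  have h1 : Tendsto (fun ε : ℝ => deriv F (x ε) / x ε) (nhdsWithin 0 (Set.Ioi 0))
      (nhds (2 * a)) := hslope.comp hx0
  have h2 : Tendsto (fun ε : ℝ => deriv F (x ε) / x ε * (x ε / Real.sqrt ε))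
      (nhdsWithin 0 (Set.Ioi 0)) (nhds (2 * a * Real.sqrt (b / a))) := h1.mul hlim
  have key : 2 * a * Real.sqrt (b / a) = 2 * Real.sqrt (a * b) := by
    rw [mul_assoc]
    congr 1
    rw [← Real.sqrt_sq ha.le, ← Real.sqrt_mul (sq_nonneg a)]
    congr 1
    field_simp
    rw [Real.sqrt_sq ha.le]
  rw [key] at h2
  refine h2.congr' ?_
  filter_upwards [self_mem_nhdsWithin] with ε hε
  have hxne : x ε ≠ 0 := ne_of_gt (hx ε hε).2
  field_simp
end
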